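/- Let k ≥ 3, c > 2, γ ∈ (0,1), and let N, R be positive integers with N/c ≤ R ≤ N/2. Let s : [N] → {0, 1, …, R} and define t : [N] → [R + ⌈N/2⌉] by t(i) = s(i) if s(i) > 0 and t(i) = R + ⌈i/2⌉ if s(i) = 0. Then: (a) some nonzero value occurs at least k times in s if and only if some value occurs at least k times in t; and (b) if the number of distinct nonzero values that occur at least k times in s is greater than γR, then the number of distinct values that occur at least k times in t is greater than (γ/c)N. -/

import Mathlib

open Finset

/-- Number of occurrences of the value `v` in the sequence `f`. -/
def occ {N : ℕ} (f : Fin N → ℕ) (v : ℕ) : ℕ :=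
  (Finset.univ.filter (fun i => f i = v)).card

theorem stmt4 (k N R : ℕ) (hk : 3 ≤ k) (hN : 0 < N) (hR : 0 < R)
    (c γ : ℝ) (hc : 2 < c) (hγ0 : 0 < γ) (hγ1 : γ < 1)
    (hNc : (N : ℝ) / c ≤ R) (hRN : (R : ℝ) ≤ N / 2)
    (s : Fin N → ℕ) (hs : ∀ i, s i ≤ R)
    (t : Fin N → ℕ)
    -- t(i) = s(i) if s(i) > 0, and t(i) = R + ⌈i/2⌉ (with 1-based index i) otherwise;
    -- for the 0-based index i, the 1-based index is i+1 and ⌈(i+1)/2⌉ = (i+2)/2 in ℕ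
    (ht : ∀ i : Fin N, t i = if 0 < s i then s i else R + (i.val + 2) / 2) :
    -- (a) some nonzero value occurs ≥ k times in s  iff  some value occurs ≥ k times in t
    ((∃ v : ℕ, 0 < v ∧ k ≤ occ s v) ↔ (∃ v : ℕ, k ≤ occ t v)) ∧
    -- (b) many distinct nonzero k-collisions in s give many distinct k-collisions in t
    (γ * R < (((Finset.Icc 1 R).filter (fun v => k ≤ occ s v)).card : ℝ) →
      γ / c * N <
        (((Finset.Icc 1 (R + (N + 1) / 2)).filter (fun v => k ≤ occ t v)).card : ℝ)) := by
  -- For v in [1, R], occ t v = occ s v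
  have hocc : ∀ v : ℕ, 0 < v → v ≤ R → occ t v = occ s v := by
    intro v hv0 hvR
    unfold occ
    congr 1
    apply Finset.filter_congr
    intro i _
    constructor
    · intro hti
      rw [ht i] at hti
      by_cases h : 0 < s i
      · simpa [h] using hti
      · simp only [h, if_false] at hti
        omega
    · intro hsi
      rw [ht i, if_pos (hsi ▸ hv0), hsi]
  -- For v > R, occ t v ≤ 2
  have hbig : ∀ v : ℕ, R < v → occ t v ≤ 2 := by
    intro v hv
    unfold occ
    have hsub : ∀ i ∈ Finset.univ.filter (fun i : Fin N => t i = v),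
        i.val ∈ ({2 * (v - R) - 2, 2 * (v - R) - 1} : Finset ℕ) := by
      intro i hi
      simp only [Finset.mem_filter, Finset.mem_univ, true_and] at hi
      rw [ht i] at hi
      by_cases h : 0 < s i
      · rw [if_pos h] at hi; have := hs i; omega
      · rw [if_neg h] at hi
        simp only [Finset.mem_insert, Finset.mem_singleton]
        omega
    calc (Finset.univ.filter (fun i : Fin N => t i = v)).card
        ≤ ({2 * (v - R) - 2, 2 * (v - R) - 1} : Finset ℕ).card := by
          apply Finset.card_le_card_of_injOn (fun i => i.val) (by intro i hi; exact hsub i hi)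
          intro a _ b _ hab
          exact Fin.val_injective hab
      _ ≤ 2 := Finset.card_insert_le _ _ |>.trans (by simp)
  -- occ t 0 = 0
  have ht0 : occ t 0 = 0 := by
    unfold occ
    rw [Finset.card_eq_zero, Finset.filter_eq_empty_iff]
    intro i _
    rw [ht i]
    by_cases h : 0 < s i <;> simp [h] <;> omega
  constructor
  · constructor
    · rintro ⟨v, hv0, hvk⟩
      refine ⟨v, ?_⟩
      have hvR : v ≤ R := by
        have : 0 < occ s v := lt_of_lt_of_le (by omega) hvk
        rw [occ, Finset.card_pos] at this
        obtain ⟨i, hi⟩ := this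
        simp only [Finset.mem_filter] at hi
        exact hi.2 ▸ hs i
      rw [hocc v hv0 hvR]; exact hvk
    · rintro ⟨v, hvk⟩
      have hv0 : 0 < v := by
        rcases Nat.eq_zero_or_pos v with h | h
        · subst h; omega
        · exact h
      have hvR : v ≤ R := by
        by_contra h
        have := hbig v (by omega)
        omega
      exact ⟨v, hv0, by rw [← hocc v hv0 hvR]; exact hvk⟩
  · intro hcard
    have hsub : (Finset.Icc 1 R).filter (fun v => k ≤ occ s v) ⊆
        (Finset.Icc 1 (R + (N + 1) / 2)).filter (fun v => k ≤ occ t v) := by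
      intro v hv
      simp only [Finset.mem_filter, Finset.mem_Icc] at hv ⊢
      obtain ⟨⟨h1, h2⟩, h3⟩ := hv
      exact ⟨⟨h1, by omega⟩, by rw [hocc v h1 h2]; exact h3⟩
    have hle := Finset.card_le_card hsub
    have : γ / c * N ≤ γ * R := by
      have : γ / c * N = γ * ((N : ℝ) / c) := by ring
      rw [this]
      exact mul_le_mul_of_nonneg_left hNc hγ0.le
    calc γ / c * (N : ℝ) ≤ γ * R := this
      _ < _ := hcard
      _ ≤ _ := by exact_mod_cast hle
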